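/- Let n ≥ 2 be an integer and 0<q<1. Define d_i = (1−q^2) q^{2(n−i)} / (1−q^{2n}) for i = 1,…,n. Then: (a) Σ_{i=1}^n d_i = 1; (b) for every i, q·d_i + (q−q^{−1})·Σ_{j<i} d_j = q^{2n−1}(1−q^2)/(1−q^{2n}), i.e., this expression is constant in i; (c) the expression q·d_i + (q−q^{−1})·Σ_{j>i} d_j is NOT constant in i (there exist i, i' for which the two values differ). -/

import Mathlib

/-- Let `n ≥ 2` be an integer and `0 < q < 1`. Define
`d_i = (1-q²) q^{2(n-i)} / (1-q^{2n})` for `i = 1, …, n`. Then: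
(a) `Σ_{i=1}^n d_i = 1`;
(b) for every `i`, `q·d_i + (q-q⁻¹)·Σ_{j<i} d_j = q^{2n-1}(1-q²)/(1-q^{2n})`, i.e.
this expression is constant in `i`;
(c) the expression `q·d_i + (q-q⁻¹)·Σ_{j>i} d_j` is NOT constant in `i`: there exist
`i, i'` in `{1, …, n}` for which the two values differ. -/
theorem stmt18 (n : ℕ) (hn : 2 ≤ n) (q : ℝ) (hq0 : 0 < q) (hq1 : q < 1)
    (d : ℕ → ℝ)
    (hd : ∀ i ∈ Finset.Icc 1 n, d i = (1 - q ^ 2) * q ^ (2 * (n - i)) / (1 - q ^ (2 * n))) :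
    (∑ i ∈ Finset.Icc 1 n, d i = 1) ∧
    (∀ i ∈ Finset.Icc 1 n,
      q * d i + (q - q⁻¹) * ∑ j ∈ Finset.Ico 1 i, d j
        = q ^ (2 * n - 1) * (1 - q ^ 2) / (1 - q ^ (2 * n))) ∧
    (∃ i ∈ Finset.Icc 1 n, ∃ i' ∈ Finset.Icc 1 n,
      q * d i + (q - q⁻¹) * ∑ j ∈ Finset.Ioc i n, d j
        ≠ q * d i' + (q - q⁻¹) * ∑ j ∈ Finset.Ioc i' n, d j) := by
  have hq2lt : q ^ 2 < 1 := by nlinarith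
  have hq2 : q ^ 2 ≠ 1 := ne_of_lt hq2lt
  have hqn : q ^ (2 * n) < 1 := pow_lt_one₀ hq0.le hq1 (by omega)
  have hD : 0 < 1 - q ^ (2 * n) := by linarith
  have hDne : (1 - q ^ (2 * n)) ≠ 0 := ne_of_gt hD
  have hqne : q ≠ 0 := ne_of_gt hq0
  -- the geometric sum
  have key : ∑ i ∈ Finset.Icc 1 n, q ^ (2 * (n - i)) = ∑ k ∈ Finset.range n, (q ^ 2) ^ k := by
    apply Finset.sum_nbij' (fun i => n - i) (fun k => n - k)
      (by intro a ha; simp at ha ⊢; omega) (by intro a ha; simp at ha ⊢; omega)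
      (by intro a ha; simp at ha ⊢; omega) (by intro a ha; simp at ha ⊢; omega)
    intro a _; rw [← pow_mul]
  -- (a)
  have ha : ∑ i ∈ Finset.Icc 1 n, d i = 1 := by
    rw [Finset.sum_congr rfl hd]
    have : ∑ i ∈ Finset.Icc 1 n, (1 - q ^ 2) * q ^ (2 * (n - i)) / (1 - q ^ (2 * n))
        = ((1 - q ^ 2) / (1 - q ^ (2 * n))) * ∑ i ∈ Finset.Icc 1 n, q ^ (2 * (n - i)) := by
      rw [Finset.mul_sum]
      exact Finset.sum_congr rfl fun i _ => by ring
    rw [this, key, geom_sum_eq hq2, ← pow_mul]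
    have h1 : q ^ 2 - 1 ≠ 0 := sub_ne_zero.mpr hq2
    field_simp
    ring
  -- step relation
  have hstep : ∀ i, 1 ≤ i → i < n → d i = q ^ 2 * d (i + 1) := by
    intro i h1 h2
    rw [hd i (by simp; omega), hd (i + 1) (by simp; omega)]
    rw [show 2 * (n - i) = 2 * (n - (i + 1)) + 2 by omega, pow_add]
    ring
  -- (b)
  have hb : ∀ i, 1 ≤ i → i ≤ n →
      q * d i + (q - q⁻¹) * ∑ j ∈ Finset.Ico 1 i, d j
        = q ^ (2 * n - 1) * (1 - q ^ 2) / (1 - q ^ (2 * n)) := by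
    intro i hi1
    induction i, hi1 using Nat.le_induction with
    | base =>
      intro _
      rw [Finset.Ico_self, Finset.sum_empty, mul_zero, add_zero,
        hd 1 (by simp; omega)]
      rw [show 2 * n - 1 = 2 * (n - 1) + 1 by omega, pow_succ]
      field_simp
      ring
    | succ i hi ih =>
      intro hin
      have ihval := ih (by omega)
      have hrec := hstep i hi (by omega)
      have hkey : q * d (i + 1) = q⁻¹ * d i := by rw [hrec]; field_simp
      rw [Finset.sum_Ico_succ_top (by omega)]
      linear_combination ihval + hkey
  refine ⟨ha, fun i hi => hb i (by simp at hi; omega) (by simp at hi; omega), ?_⟩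
  -- (c)
  refine ⟨1, by simp; omega, n, by simp; omega, ?_⟩
  have hIoc : ∑ j ∈ Finset.Ioc 1 n, d j = 1 - d 1 := by
    have hins : Finset.Icc 1 n = insert 1 (Finset.Ioc 1 n) := by
      ext x; simp; omega
    have h1 : (1 : ℕ) ∉ Finset.Ioc 1 n := by simp
    rw [hins, Finset.sum_insert h1] at ha
    linarith
  rw [hIoc, Finset.Ioc_self, Finset.sum_empty, mul_zero, add_zero]
  rw [hd 1 (by simp; omega), hd n (by simp; omega)]
  simp only [Nat.sub_self, mul_zero, pow_zero, mul_one]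
  set A := q ^ (2 * (n - 1)) with hA
  have hA0 : 0 < A := pow_pos hq0 _
  have hA1 : A < 1 := pow_lt_one₀ hq0.le hq1 (by omega)
  have h2n : q ^ (2 * n) = A * q ^ 2 := by
    rw [hA, ← pow_add]; congr 1; omega
  rw [h2n] at hDne ⊢
  intro h
  field_simp [show 1 - q ^ 2 * A ≠ 0 by rw [mul_comm]; exact hDne] at h
  have hAq : A * q ^ 2 < 1 := by nlinarith
  have hfac : (1 - q ^ 2) * ((1 - A) * ((q ^ 2 + 1) * (1 - A * q ^ 2) ^ 2)) = 0 := by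
    linear_combination -(1 - A * q ^ 2) ^ 2 * h
  have hpos : 0 < (1 - q ^ 2) * ((1 - A) * ((q ^ 2 + 1) * (1 - A * q ^ 2) ^ 2)) := by
    apply mul_pos (by linarith)
    apply mul_pos (by linarith)
    apply mul_pos (by positivity)
    positivity
  exact absurd hfac (ne_of_gt hpos)
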